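/- Let H be a classical (diagonal) Hamiltonian on n qubits with H(x) = ⟨x|H|x⟩, β > 0, and let |π⟩ = Z^{-1/2} Σ_x e^{-βH(x)/2}|x⟩ be the coherent Gibbs state with Z = Σ_x e^{-βH(x)}. For each qubit j, define Γ_j = X_j e^{-βH/2} X_j e^{βH/2}, where X_j is the Pauli X on qubit j. Then Γ_j is diagonal in the standard basis with positive diagonal entries, and X_j|π⟩ = Γ_j|π⟩ for all j; moreover each operator Γ_j − X_j is positive semidefinite with (Γ_j − X_j)|π⟩ = 0. -/

import Mathlib

open scoped Classical

/-- Bit-flip of coordinate `j`. -/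
noncomputable def flipBit {n : ℕ} (j : Fin n) (x : Fin n → Bool) : Fin n → Bool :=
  Function.update x j (!x j)

/-- The Pauli `X` on qubit `j` as a matrix in the standard basis of `{0,1}^n`. -/
noncomputable def pauliX {n : ℕ} (j : Fin n) :
    Matrix (Fin n → Bool) (Fin n → Bool) ℝ :=
  fun x y => if y = flipBit j x then 1 else 0

lemma flipBit_involutive {n : ℕ} (j : Fin n) : Function.Involutive (flipBit j) := by
  intro x; funext i
  by_cases h : i = j <;> simp [flipBit, Function.update, h]

lemma pauliX_conj_diag {n : ℕ} (j : Fin n) (d : (Fin n → Bool) → ℝ) :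
    pauliX j * Matrix.diagonal d * pauliX j = Matrix.diagonal (fun x => d (flipBit j x)) := by
  ext x y
  simp only [Matrix.mul_apply, pauliX, Matrix.diagonal_apply, ite_mul, one_mul, zero_mul,
    mul_ite, mul_one, mul_zero, Finset.sum_ite_eq, Finset.sum_ite_eq', Finset.mem_univ, if_true]
  rw [Finset.sum_eq_single (flipBit j y)]
  · rw [flipBit_involutive j y]
    by_cases h : x = y
    · subst h; simp
    · simp only [h, Ne.symm h, if_true, if_false]
      rw [if_neg (fun hh => h ((flipBit_involutive j).injective hh).symm)]
  · intro b _ hb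
    have : y ≠ flipBit j b := fun hh => hb (by rw [hh, flipBit_involutive])
    simp [this]
  · simp

lemma pauliX_symm {n : ℕ} (j : Fin n) (x y : Fin n → Bool) :
    pauliX j x y = pauliX j y x := by
  unfold pauliX
  by_cases h : y = flipBit j x
  · rw [if_pos h, if_pos (by rw [h, flipBit_involutive])]
  · rw [if_neg h, if_neg (fun hh => h (by rw [hh, flipBit_involutive]))]

lemma pauliX_mulVec {n : ℕ} (j : Fin n) (v : (Fin n → Bool) → ℝ) (x : Fin n → Bool) :
    (pauliX j).mulVec v x = v (flipBit j x) := by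
  simp [Matrix.mulVec, dotProduct, pauliX, ite_mul, one_mul, zero_mul]

lemma sum_flip {n : ℕ} (j : Fin n) (F : (Fin n → Bool) → ℝ) :
    ∑ x, F (flipBit j x) = ∑ x, F x :=
  Fintype.sum_bijective (flipBit j) (flipBit_involutive j).bijective _ _ (fun _ => rfl)

theorem stmt_17 {n : ℕ} (β : ℝ) (hβ : 0 < β) (H : (Fin n → Bool) → ℝ) (j : Fin n) :
    let Z : ℝ := ∑ x, Real.exp (-β * H x)
    let π : (Fin n → Bool) → ℝ := fun x => Real.exp (-β * H x / 2) / Real.sqrt Z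
    let Γ : Matrix (Fin n → Bool) (Fin n → Bool) ℝ :=
      pauliX j * Matrix.diagonal (fun x => Real.exp (-β * H x / 2)) * pauliX j *
        Matrix.diagonal (fun x => Real.exp (β * H x / 2))
    (∀ x y, x ≠ y → Γ x y = 0) ∧ (∀ x, 0 < Γ x x) ∧
      (pauliX j).mulVec π = Γ.mulVec π ∧
      (Γ - pauliX j).PosSemidef ∧ (Γ - pauliX j).mulVec π = 0 := by
  intro Z π Γ
  set g : (Fin n → Bool) → ℝ :=
    fun x => Real.exp (-β * H (flipBit j x) / 2) * Real.exp (β * H x / 2) with hgdef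
  have hΓ : Γ = Matrix.diagonal g := by
    show pauliX j * Matrix.diagonal _ * pauliX j * Matrix.diagonal _ = _
    rw [pauliX_conj_diag, Matrix.diagonal_mul_diagonal]
  have hg : ∀ x, 0 < g x := fun x => mul_pos (Real.exp_pos _) (Real.exp_pos _)
  have hmul : ∀ x, g x * g (flipBit j x) = 1 := by
    intro x
    simp only [hgdef, flipBit_involutive j x]
    rw [← Real.exp_add, ← Real.exp_add, ← Real.exp_add]
    rw [← Real.exp_zero]
    congr 1
    ring
  -- Γ π = X π pointwise
  have hmv : ∀ x, Γ.mulVec π x = π (flipBit j x) := by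
    intro x
    rw [hΓ, Matrix.mulVec_diagonal]
    have key : g x * Real.exp (-β * H x / 2) = Real.exp (-β * H (flipBit j x) / 2) := by
      rw [hgdef]
      show Real.exp _ * Real.exp _ * Real.exp _ = _
      rw [← Real.exp_add, ← Real.exp_add]
      congr 1
      ring
    show g x * (Real.exp (-β * H x / 2) / Real.sqrt Z) = Real.exp (-β * H (flipBit j x) / 2) / Real.sqrt Z
    rw [← mul_div_assoc, key]
  refine ⟨?_, ?_, ?_, ?_, ?_⟩
  · intro x y hxy
    rw [hΓ, Matrix.diagonal_apply_ne _ hxy]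
  · intro x
    rw [hΓ, Matrix.diagonal_apply_eq]
    exact hg x
  · funext x
    rw [pauliX_mulVec, hmv]
  · refine Matrix.posSemidef_iff_dotProduct_mulVec.mpr ⟨?_, ?_⟩
    · have hX : (pauliX j).IsHermitian := by
        ext x y
        simp only [Matrix.conjTranspose_apply, star_trivial]
        exact pauliX_symm j y x
      have hD : Γ.IsHermitian := by
        rw [hΓ]
        exact Matrix.isHermitian_diagonal _
      exact hD.sub hX
    · intro v
      rw [star_trivial]
      have hquad : dotProduct v ((Γ - pauliX j).mulVec v)
          = ∑ x, (g x * v x ^ 2 - v x * v (flipBit j x)) := by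
        simp only [dotProduct, Matrix.sub_mulVec, Pi.sub_apply, hΓ,
          Matrix.mulVec_diagonal, pauliX_mulVec]
        apply Finset.sum_congr rfl
        intro x _
        ring
      rw [hquad]
      set A := ∑ x, g x * v x ^ 2 with hA
      set B := ∑ x, v x * v (flipBit j x) with hB
      have hAB : ∑ x, (g x * v x ^ 2 - v x * v (flipBit j x)) = A - B :=
        Finset.sum_sub_distrib _ _
      rw [hAB]
      have hQ : 0 ≤ ∑ x, (Real.sqrt (g x) * v x - Real.sqrt (g (flipBit j x)) * v (flipBit j x)) ^ 2 :=
        Finset.sum_nonneg (fun x _ => sq_nonneg _)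
      have hterm : ∀ x, (Real.sqrt (g x) * v x - Real.sqrt (g (flipBit j x)) * v (flipBit j x)) ^ 2
          = g x * v x ^ 2 + g (flipBit j x) * v (flipBit j x) ^ 2 - 2 * (v x * v (flipBit j x)) := by
        intro x
        have ha : Real.sqrt (g x) ^ 2 = g x := Real.sq_sqrt (hg x).le
        have hb : Real.sqrt (g (flipBit j x)) ^ 2 = g (flipBit j x) :=
          Real.sq_sqrt (hg _).le
        have hab : Real.sqrt (g x) * Real.sqrt (g (flipBit j x)) = 1 := by
          rw [← Real.sqrt_mul (hg x).le, hmul x, Real.sqrt_one]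
        linear_combination v x ^ 2 * ha + v (flipBit j x) ^ 2 * hb
          - 2 * v x * v (flipBit j x) * hab
      have hQ2 : ∑ x, (Real.sqrt (g x) * v x - Real.sqrt (g (flipBit j x)) * v (flipBit j x)) ^ 2
          = 2 * A - 2 * B := by
        rw [Finset.sum_congr rfl (fun x _ => hterm x)]
        rw [Finset.sum_sub_distrib, Finset.sum_add_distrib]
        rw [sum_flip j (fun x => g x * v x ^ 2)]
        rw [← Finset.mul_sum]
        ring
      linarith [hQ2 ▸ hQ]
  · funext x
    rw [Matrix.sub_mulVec, Pi.sub_apply, hmv, pauliX_mulVec, Pi.zero_apply, sub_self]
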